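/- Let n ≥ 1, x, z ∈ S^n with ∢(x,z) = π/2, and μ a Borel probability measure on S^n. Then lim_{s→0+} [T^1_μ(cos s · x + sin s · z) − 2 T^1_μ(x) + T^1_μ(cos s · x − sin s · z)]/s = 2 μ({x}) − 2 μ({−x}). -/

import Mathlib

open MeasureTheory Filter RealInnerProductSpace

/-- The `p`-Wasserstein distance with cost function `c` (the distance of the
underlying space): infimum over couplings of `∫ c(x,y)^p dπ`, to the power `1/p`. -/
noncomputable def wassersteinDist {X : Type*} [MeasurableSpace X]
    (c : X → X → ℝ) (p : ℝ) (μ ν : Measure X) : ℝ :=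
  sInf {r : ℝ | ∃ π : Measure (X × X), IsProbabilityMeasure π ∧
      π.map Prod.fst = μ ∧ π.map Prod.snd = ν ∧
      r = ∫ q, c q.1 q.2 ^ p ∂π} ^ (1 / p)

/-- The unit sphere of `ℝ^{n+1}`. -/
abbrev Sph (n : ℕ) := Metric.sphere (0 : EuclideanSpace ℝ (Fin (n + 1))) 1

/-- The angular (geodesic) distance on the sphere: `∢(x,y) = arccos ⟨x,y⟩`. -/
noncomputable def sphAngle {n : ℕ} (x y : Sph n) : ℝ :=
  Real.arccos (inner ℝ (x : EuclideanSpace ℝ (Fin (n + 1))) (y : EuclideanSpace ℝ (Fin (n + 1))))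

/-- The `p`-Wasserstein potential of a measure on the sphere, evaluated at an
ambient vector `v`: `∫ arccos⟨v,y⟩^p dμ(y)`. -/
noncomputable def sphPotential {n : ℕ} (p : ℝ) (μ : MeasureTheory.Measure (Sph n))
    (v : EuclideanSpace ℝ (Fin (n + 1))) : ℝ :=
  ∫ y, Real.arccos (inner ℝ v (y : EuclideanSpace ℝ (Fin (n + 1)))) ^ p ∂μ

lemma antitone_arccos' : Antitone Real.arccos := fun a b h => by
  unfold Real.arccos
  have := Real.monotone_arcsin h
  linarith

lemma key_lip {a b s : ℝ} (hab : a ^ 2 + b ^ 2 ≤ 1) (hs0 : 0 ≤ s) (hsπ : s ≤ Real.pi) :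
    |Real.arccos (Real.cos s * a + Real.sin s * b) - Real.arccos a| ≤ s := by
  have ha2 : a ^ 2 ≤ 1 := by nlinarith [sq_nonneg b]
  have ha : |a| ≤ 1 := (sq_le_one_iff_abs_le_one _).mp ha2
  have ha1 := abs_le.mp ha
  have hb : |b| ≤ Real.sqrt (1 - a ^ 2) := by
    have : b ^ 2 ≤ 1 - a ^ 2 := by linarith
    calc |b| = Real.sqrt (b ^ 2) := (Real.sqrt_sq_eq_abs b).symm
    _ ≤ _ := Real.sqrt_le_sqrt this
  have hb1 := abs_le.mp hb
  have hsin : 0 ≤ Real.sin s := Real.sin_nonneg_of_nonneg_of_le_pi hs0 hsπ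
  set u := Real.cos s * a + Real.sin s * b with hu
  have hu2 : u ^ 2 ≤ 1 := by
    rw [hu]
    nlinarith [sq_nonneg (a * Real.sin s - b * Real.cos s), Real.sin_sq_add_cos_sq s]
  have hu1 := abs_le.mp ((sq_le_one_iff_abs_le_one _).mp hu2)
  set θ := Real.arccos a with hθ
  have hθ0 : 0 ≤ θ := Real.arccos_nonneg a
  have hθπ : θ ≤ Real.pi := Real.arccos_le_pi a
  have hcθ : Real.cos θ = a := Real.cos_arccos ha1.1 ha1.2
  have hsθ : Real.sin θ = Real.sqrt (1 - a ^ 2) := Real.sin_arccos a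
  have hupper : Real.arccos u ≤ θ + s := by
    by_cases hc : θ + s ≤ Real.pi
    · have h1 : Real.cos (θ + s) ≤ u := by
        rw [Real.cos_add, hcθ, hsθ]
        nlinarith
      calc Real.arccos u ≤ Real.arccos (Real.cos (θ + s)) := antitone_arccos' h1
      _ = θ + s := Real.arccos_cos (by linarith) hc
    · exact (Real.arccos_le_pi u).trans (by linarith)
  have hlower : θ - s ≤ Real.arccos u := by
    by_cases hc : s ≤ θ
    · have h2 : u ≤ Real.cos (θ - s) := by
        rw [Real.cos_sub, hcθ, hsθ]
        nlinarith
      calc θ - s = Real.arccos (Real.cos (θ - s)) :=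
            (Real.arccos_cos (by linarith) (by linarith)).symm
      _ ≤ Real.arccos u := antitone_arccos' h2
    · linarith [Real.arccos_nonneg u]
  rw [abs_le]
  constructor <;> linarith

lemma key_deriv {a b : ℝ} (h1 : a ≠ -1) (h2 : a ≠ 1) :
    HasDerivAt (fun s => Real.arccos (Real.cos s * a + Real.sin s * b))
      (-(1 / Real.sqrt (1 - a ^ 2)) * b) 0 := by
  have hu : HasDerivAt (fun s => Real.cos s * a + Real.sin s * b) b 0 := by
    have := ((Real.hasDerivAt_cos 0).mul_const a).add ((Real.hasDerivAt_sin 0).mul_const b)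
    simp only [Real.sin_zero, Real.cos_zero, neg_zero, zero_mul, one_mul, zero_add] at this
    exact this
  have hu0 : Real.cos 0 * a + Real.sin 0 * b = a := by simp
  have harc : HasDerivAt Real.arccos (-(1 / Real.sqrt (1 - a ^ 2)))
      (Real.cos 0 * a + Real.sin 0 * b) := by
    rw [hu0]; exact Real.hasDerivAt_arccos h1 h2
  exact HasDerivAt.comp (h₂ := Real.arccos) (h := fun s => Real.cos s * a + Real.sin s * b) 0 harc hu

/-- Second-difference formula for the Wasserstein potential on the sphere,
case `p = 1`. -/
theorem sphere_potential_second_difference_one {n : ℕ} (hn : 1 ≤ n)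
    (x z : Sph n) (hxz : sphAngle x z = Real.pi / 2)
    (μ : Measure (Sph n)) (hμ : IsProbabilityMeasure μ) :
    Tendsto (fun s : ℝ =>
        (sphPotential 1 μ (Real.cos s • (x : EuclideanSpace ℝ (Fin (n + 1))) +
            Real.sin s • (z : EuclideanSpace ℝ (Fin (n + 1)))) -
          2 * sphPotential 1 μ (x : EuclideanSpace ℝ (Fin (n + 1))) +
          sphPotential 1 μ (Real.cos s • (x : EuclideanSpace ℝ (Fin (n + 1))) -
            Real.sin s • (z : EuclideanSpace ℝ (Fin (n + 1))))) / s)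
      (nhdsWithin 0 (Set.Ioi 0))
      (nhds (2 * (μ {x}).toReal - 2 * (μ {-x}).toReal)) := by
  classical
  set E := EuclideanSpace ℝ (Fin (n + 1))
  have hx1 : ‖(x : E)‖ = 1 := mem_sphere_zero_iff_norm.mp x.2
  have hz1 : ‖(z : E)‖ = 1 := mem_sphere_zero_iff_norm.mp z.2
  -- orthogonality
  have habs : abs (⟪(x : E), (z : E)⟫) ≤ 1 := by
    have := abs_real_inner_le_norm (x : E) (z : E)
    rwa [hx1, hz1, mul_one] at this
  have ho : ⟪(x : E), (z : E)⟫ = 0 := by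
    have h := congrArg Real.cos hxz
    unfold sphAngle at h
    rwa [Real.cos_arccos (abs_le.mp habs).1 (abs_le.mp habs).2, Real.cos_pi_div_two] at h
  have ho' : ⟪(z : E), (x : E)⟫ = 0 := by rw [real_inner_comm]; exact ho
  -- Bessel
  have horth : Orthonormal ℝ ![(x : E), (z : E)] := by
    rw [orthonormal_iff_ite]
    intro i j
    fin_cases i <;> fin_cases j <;>
      simp only [Fin.isValue, Matrix.cons_val_zero, Matrix.cons_val_one, Matrix.head_cons,
        real_inner_self_eq_norm_sq, hx1, hz1, ho, ho', one_pow]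
    · norm_num
    · rw [if_neg (by decide)]; exact ho
    · rw [if_neg (by decide)]; exact ho'
    · norm_num
  have hbessel : ∀ y : Sph n, ⟪(x : E), (y : E)⟫ ^ 2 + ⟪(z : E), (y : E)⟫ ^ 2 ≤ 1 := by
    intro y
    have hy1 : ‖(y : E)‖ = 1 := mem_sphere_zero_iff_norm.mp y.2
    have h0 := horth.sum_inner_products_le (y : E) (s := Finset.univ)
    rw [Fin.sum_univ_two] at h0
    simp only [Matrix.cons_val_zero, Matrix.cons_val_one, Matrix.head_cons,
      Real.norm_eq_abs, sq_abs, hy1, one_pow] at h0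
    exact h0
  -- continuity and integrability
  have hcont : ∀ v : E, Continuous fun y : Sph n => Real.arccos ⟪v, (y : E)⟫ := fun v =>
    Real.continuous_arccos.comp (Continuous.inner continuous_const continuous_subtype_val)
  have hint : ∀ v : E, Integrable (fun y : Sph n => Real.arccos ⟪v, (y : E)⟫) μ := fun v =>
    (hcont v).integrable_of_hasCompactSupport (HasCompactSupport.of_compactSpace _)
  have hpot : ∀ v : E, sphPotential 1 μ v = ∫ y, Real.arccos ⟪v, (y : E)⟫ ∂μ := by
    intro v
    simp only [sphPotential, Real.rpow_one]
  -- the integrand family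
  set F : ℝ → Sph n → ℝ := fun s y =>
    (Real.arccos (Real.cos s * ⟪(x : E), (y : E)⟫ + Real.sin s * ⟪(z : E), (y : E)⟫)
      - 2 * Real.arccos ⟪(x : E), (y : E)⟫
      + Real.arccos (Real.cos s * ⟪(x : E), (y : E)⟫ - Real.sin s * ⟪(z : E), (y : E)⟫)) / s
    with hF
  have e1 : ∀ s : ℝ, (fun y : Sph n =>
      Real.arccos ⟪Real.cos s • (x : E) + Real.sin s • (z : E), (y : E)⟫)
      = fun y : Sph n => Real.arccos (Real.cos s * ⟪(x : E), (y : E)⟫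
          + Real.sin s * ⟪(z : E), (y : E)⟫) := by
    intro s; funext y
    rw [inner_add_left, real_inner_smul_left, real_inner_smul_left]
  have e2 : ∀ s : ℝ, (fun y : Sph n =>
      Real.arccos ⟪Real.cos s • (x : E) - Real.sin s • (z : E), (y : E)⟫)
      = fun y : Sph n => Real.arccos (Real.cos s * ⟪(x : E), (y : E)⟫
          - Real.sin s * ⟪(z : E), (y : E)⟫) := by
    intro s; funext y
    rw [inner_sub_left, real_inner_smul_left, real_inner_smul_left]
  have int1 : ∀ s : ℝ, Integrable (fun y : Sph n =>
      Real.arccos (Real.cos s * ⟪(x : E), (y : E)⟫ + Real.sin s * ⟪(z : E), (y : E)⟫)) μ :=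
    fun s => (e1 s) ▸ hint _
  have int2 : ∀ s : ℝ, Integrable (fun y : Sph n =>
      Real.arccos (Real.cos s * ⟪(x : E), (y : E)⟫ - Real.sin s * ⟪(z : E), (y : E)⟫)) μ :=
    fun s => (e2 s) ▸ hint _
  have key1 : ∀ s : ℝ,
      (sphPotential 1 μ (Real.cos s • (x : E) + Real.sin s • (z : E)) -
        2 * sphPotential 1 μ (x : E) +
        sphPotential 1 μ (Real.cos s • (x : E) - Real.sin s • (z : E))) / s
      = ∫ y, F s y ∂μ := by
    intro s
    rw [hF]
    rw [MeasureTheory.integral_div]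
    congr 1
    have hsub : Integrable (fun y : Sph n =>
        Real.arccos (Real.cos s * ⟪(x : E), (y : E)⟫ + Real.sin s * ⟪(z : E), (y : E)⟫)
          - 2 * Real.arccos ⟪(x : E), (y : E)⟫) μ :=
      (int1 s).sub ((hint (x : E)).const_mul 2)
    rw [hpot, hpot, hpot, e1 s, e2 s, ← MeasureTheory.integral_const_mul (2:ℝ),
      ← integral_sub (int1 s) ((hint (x : E)).const_mul 2),
      ← integral_add hsub (int2 s)]
  -- x ≠ -x
  have hxnex : x ≠ -x := by
    intro h
    have h2 : (x : E) = -(x : E) := by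
      nth_rewrite 1 [h]; exact coe_neg_sphere x
    have hx0 : (x : E) + (x : E) = 0 := by nth_rewrite 1 [h2]; simp
    have : (2 : ℝ) • (x : E) = 0 := by rw [two_smul]; exact hx0
    have hx00 : (x : E) = 0 := by
      rcases smul_eq_zero.mp this with h' | h'
      · norm_num at h'
      · exact h'
    rw [hx00] at hx1
    simp at hx1
  -- limit function
  set φ : Sph n → ℝ := fun y => if y = x then (2 : ℝ) else if y = -x then -2 else 0 with hφ
  -- pointwise limits
  have hlim : ∀ y : Sph n, Tendsto (fun s => F s y) (nhdsWithin 0 (Set.Ioi 0)) (nhds (φ y)) := by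
    intro y
    have hy1 : ‖(y : E)‖ = 1 := mem_sphere_zero_iff_norm.mp y.2
    by_cases h1 : y = x
    · have hax : ⟪(x : E), (y : E)⟫ = 1 := by
        rw [h1, real_inner_self_eq_norm_sq, hx1]; norm_num
      have hbx : ⟪(z : E), (y : E)⟫ = 0 := by rw [h1]; exact ho'
      have hφy : φ y = 2 := by rw [hφ]; simp only [if_pos h1]
      rw [hφy]
      have hev : ∀ᶠ s in nhdsWithin 0 (Set.Ioi 0), F s y = 2 := by
        filter_upwards [Ioc_mem_nhdsGT Real.pi_pos] with s hs
        rw [hF]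
        simp only [hax, hbx, mul_one, mul_zero, add_zero, sub_zero, Real.arccos_one, mul_zero]
        rw [Real.arccos_cos hs.1.le hs.2, div_eq_iff hs.1.ne']
        ring
      exact Tendsto.congr' (Filter.EventuallyEq.symm hev) tendsto_const_nhds
    · by_cases h2 : y = -x
      · have hax : ⟪(x : E), (y : E)⟫ = -1 := by
          rw [h2, coe_neg_sphere, inner_neg_right, real_inner_self_eq_norm_sq, hx1]; norm_num
        have hbx : ⟪(z : E), (y : E)⟫ = 0 := by
          rw [h2, coe_neg_sphere, inner_neg_right, ho']; norm_num
        have hφy : φ y = -2 := by rw [hφ]; simp only [if_neg h1, if_pos h2]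
        rw [hφy]
        have hev : ∀ᶠ s in nhdsWithin 0 (Set.Ioi 0), F s y = -2 := by
          filter_upwards [Ioc_mem_nhdsGT Real.pi_pos] with s hs
          rw [hF]
          simp only [hax, hbx, mul_neg, mul_one, mul_zero, add_zero, sub_zero,
            Real.arccos_neg_one]
          rw [Real.arccos_neg, Real.arccos_cos hs.1.le hs.2, div_eq_iff hs.1.ne']
          ring
        exact Tendsto.congr' (Filter.EventuallyEq.symm hev) tendsto_const_nhds
      · -- generic point
        set a := ⟪(x : E), (y : E)⟫ with hadef
        set b := ⟪(z : E), (y : E)⟫ with hbdef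
        have hane1 : a ≠ 1 := by
          intro h
          apply h1
          have := (inner_eq_one_iff_of_norm_eq_one hx1 hy1).mp h
          exact (Subtype.ext this).symm
        have hanem1 : a ≠ -1 := by
          intro h
          apply h2
          have hinner : ⟪-(x : E), (y : E)⟫ = 1 := by
            rw [inner_neg_left, ← hadef, h]; norm_num
          have hnx1 : ‖-(x : E)‖ = 1 := by rw [norm_neg]; exact hx1
          have := (inner_eq_one_iff_of_norm_eq_one hnx1 hy1).mp hinner
          apply Subtype.ext
          rw [coe_neg_sphere]
          exact this.symm
        have d1 := key_deriv (b := b) hanem1 hane1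
        have d2' := key_deriv (b := -b) hanem1 hane1
        have d2 : HasDerivAt (fun s => Real.arccos (Real.cos s * a - Real.sin s * b))
            (-(1 / Real.sqrt (1 - a ^ 2)) * (-b)) 0 := by
          convert d2' using 2 with s
          ring
        have s1 := hasDerivAt_iff_tendsto_slope.mp d1
        have s2 := hasDerivAt_iff_tendsto_slope.mp d2
        have hsum := s1.add s2
        have hmono : nhdsWithin (0:ℝ) (Set.Ioi 0) ≤ nhdsWithin (0:ℝ) {(0:ℝ)}ᶜ :=
          nhdsWithin_mono 0 (fun s hs => ne_of_gt hs)
        have hsum' := (hsum.mono_left hmono)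
        have hval : -(1 / Real.sqrt (1 - a ^ 2)) * b + -(1 / Real.sqrt (1 - a ^ 2)) * (-b)
            = 0 := by ring
        rw [hval] at hsum'
        have hφ0 : φ y = 0 := by rw [hφ]; simp only [if_neg h1, if_neg h2]
        rw [hφ0]
        apply Tendsto.congr' _ hsum'
        filter_upwards [self_mem_nhdsWithin] with s hs
        rw [slope_def_field, slope_def_field, hF]
        simp only [Real.cos_zero, Real.sin_zero, one_mul, zero_mul, add_zero, sub_zero, sub_zero]
        rw [← add_div]
        congr 1
        ring
  -- dominated convergence
  have hDCT : Tendsto (fun s => ∫ y, F s y ∂μ) (nhdsWithin 0 (Set.Ioi 0))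
      (nhds (∫ y, φ y ∂μ)) := by
    apply MeasureTheory.tendsto_integral_filter_of_dominated_convergence (fun _ => (2 : ℝ))
    · filter_upwards with s
      apply Continuous.aestronglyMeasurable
      rw [hF]
      apply Continuous.div_const
      apply Continuous.add
      · apply Continuous.sub
        · exact Real.continuous_arccos.comp ((continuous_const.mul
            ((Continuous.inner continuous_const continuous_subtype_val))).add
            (continuous_const.mul (Continuous.inner continuous_const continuous_subtype_val)))
        · exact continuous_const.mul (Real.continuous_arccos.comp
            (Continuous.inner continuous_const continuous_subtype_val))
      · exact Real.continuous_arccos.comp ((continuous_const.mul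
          ((Continuous.inner continuous_const continuous_subtype_val))).sub
          (continuous_const.mul (Continuous.inner continuous_const continuous_subtype_val)))
    · filter_upwards [Ioc_mem_nhdsGT Real.pi_pos] with s hs
      filter_upwards with y
      have hy := hbessel y
      rw [hF]
      set a := ⟪(x : E), (y : E)⟫ with hadef
      set b := ⟪(z : E), (y : E)⟫ with hbdef
      have k1 := key_lip (a := a) (b := b) hy hs.1.le hs.2
      have k2 := key_lip (a := a) (b := -b)
        (by rw [neg_pow]; simpa using hy) hs.1.le hs.2
      rw [mul_neg, ← sub_eq_add_neg] at k2
      have hnum : |Real.arccos (Real.cos s * a + Real.sin s * b)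
          - 2 * Real.arccos a
          + Real.arccos (Real.cos s * a - Real.sin s * b)| ≤ 2 * s := by
        have habsadd := abs_add_le
          (Real.arccos (Real.cos s * a + Real.sin s * b) - Real.arccos a)
          (Real.arccos (Real.cos s * a - Real.sin s * b) - Real.arccos a)
        calc |Real.arccos (Real.cos s * a + Real.sin s * b)
            - 2 * Real.arccos a
            + Real.arccos (Real.cos s * a - Real.sin s * b)|
            = |(Real.arccos (Real.cos s * a + Real.sin s * b) - Real.arccos a)
              + (Real.arccos (Real.cos s * a - Real.sin s * b) - Real.arccos a)| := by
              congr 1; ring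
          _ ≤ _ := habsadd
          _ ≤ s + s := add_le_add k1 k2
          _ = 2 * s := by ring
      rw [Real.norm_eq_abs, abs_div, abs_of_pos hs.1]
      rw [div_le_iff₀ hs.1]
      linarith [hnum]
    · exact integrable_const 2
    · filter_upwards with y
      exact hlim y
  -- identify the limit
  have hφint : ∫ y, φ y ∂μ = 2 * (μ {x}).toReal - 2 * (μ {-x}).toReal := by
    have hrw : φ = fun y : Sph n => Set.indicator {x} (fun _ => (2 : ℝ)) y
        + Set.indicator {-x} (fun _ => (-2 : ℝ)) y := by
      funext y
      rw [hφ]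
      by_cases h1 : y = x
      · have h2 : y ≠ -x := by rw [h1]; exact hxnex
        simp [Set.indicator_apply, h1, h2, hxnex]
      · by_cases h2 : y = -x
        · simp [Set.indicator_apply, h1, h2, Ne.symm hxnex]
        · simp [Set.indicator_apply, h1, h2]
    rw [hrw]
    rw [integral_add
      ((integrable_const (2:ℝ)).indicator (measurableSet_singleton x))
      ((integrable_const (-2:ℝ)).indicator (measurableSet_singleton (-x)))]
    rw [integral_indicator_const _ (measurableSet_singleton x),
      integral_indicator_const _ (measurableSet_singleton (-x))]
    simp only [smul_eq_mul, measureReal_def]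
    ring
  rw [← hφint]
  apply Tendsto.congr' _ hDCT
  filter_upwards [self_mem_nhdsWithin] with s _
  exact (key1 s).symm
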